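/- Let e=(u,v) be a tight edge (a vital edge saturated in some maximum (s,t)-flow). Let C(e) be a mincut for e and let C_{v,u} be the (s,t)-cut of least capacity among cuts containing v but not u (i.e., v on the source side and u on the sink side). Then c(C(e)) < c(C_{v,u}). Consequently, a mincut for e coincides with an (s,t)-cut of least capacity separating u and v. -/
import Mathlib


open Finset

variable {V : Type*} [Fintype V] [DecidableEq V]

/-- capacity of the cut given by the source-side vertex set `C`:
total capacity of edges with tail in `C` and head outside `C`. -/
noncomputable def cutCap (E : Finset (V × V)) (w : V × V → ℝ) (C : Finset V) : ℝ :=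
  ∑ e ∈ E.filter (fun e => e.1 ∈ C ∧ e.2 ∉ C), w e

/-- `C` is an (s,t)-cut. -/
def IsCut (s t : V) (C : Finset V) : Prop := s ∈ C ∧ t ∉ C

/-- edge `e` is a contributing (outgoing) edge of the cut `C`. -/
def Contributes (e : V × V) (C : Finset V) : Prop := e.1 ∈ C ∧ e.2 ∉ C

/-- `f` is a feasible (s,t)-flow on edge set `E` with capacities `w`. -/
structure IsFlow (E : Finset (V × V)) (w : V × V → ℝ) (s t : V) (f : V × V → ℝ) : Prop where
  nonneg : ∀ e ∈ E, 0 ≤ f e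
  le_cap : ∀ e ∈ E, f e ≤ w e
  support : ∀ e, e ∉ E → f e = 0
  conserve : ∀ v, v ≠ s → v ≠ t →
    ∑ e ∈ E.filter (fun e => e.1 = v), f e = ∑ e ∈ E.filter (fun e => e.2 = v), f e

/-- value of an (s,t)-flow: the net flow out of `s`. -/
noncomputable def flowValue (E : Finset (V × V)) (s : V) (f : V × V → ℝ) : ℝ :=
  ∑ e ∈ E.filter (fun e => e.1 = s), f e - ∑ e ∈ E.filter (fun e => e.2 = s), f e

/-- `f` is a maximum (s,t)-flow. -/
def IsMaxFlow (E : Finset (V × V)) (w : V × V → ℝ) (s t : V) (f : V × V → ℝ) : Prop :=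
  IsFlow E w s t f ∧ ∀ g, IsFlow E w s t g → flowValue E s g ≤ flowValue E s f

/-- capacity of a minimum (s,t)-cut. -/
noncomputable def minCutCap (E : Finset (V × V)) (w : V × V → ℝ) (s t : V) : ℝ :=
  sInf {x | ∃ C : Finset V, IsCut s t C ∧ cutCap E w C = x}

/-- `e` is a vital edge: deleting it strictly decreases the min (s,t)-cut capacity. -/
def Vital (E : Finset (V × V)) (w : V × V → ℝ) (s t : V) (e : V × V) : Prop :=
  e ∈ E ∧ minCutCap (E.erase e) w s t < minCutCap E w s t

/-- `C` is a mincut for the edge `e`: a least-capacity (s,t)-cut in which `e` contributes. -/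
def IsMincutFor (E : Finset (V × V)) (w : V × V → ℝ) (s t : V) (e : V × V)
    (C : Finset V) : Prop :=
  IsCut s t C ∧ Contributes e C ∧
    ∀ C', IsCut s t C' → Contributes e C' → cutCap E w C ≤ cutCap E w C'

/-- total flow on edges leaving the cut `C`. -/
noncomputable def flowOut (E : Finset (V × V)) (f : V × V → ℝ) (C : Finset V) : ℝ :=
  ∑ e ∈ E.filter (fun e => e.1 ∈ C ∧ e.2 ∉ C), f e

/-- total flow on edges entering the cut `C`. -/
noncomputable def flowIn (E : Finset (V × V)) (f : V × V → ℝ) (C : Finset V) : ℝ :=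
  ∑ e ∈ E.filter (fun e => e.1 ∉ C ∧ e.2 ∈ C), f e


section Aux

/-- net outflow of a vertex. -/
noncomputable def netOut (E : Finset (V × V)) (f : V × V → ℝ) (v : V) : ℝ :=
  ∑ e ∈ E.filter (fun e => e.1 = v), f e - ∑ e ∈ E.filter (fun e => e.2 = v), f e

lemma sum_fiber_fst (E : Finset (V × V)) (g : V × V → ℝ) (D : Finset V) :
    ∑ v ∈ D, ∑ e ∈ E.filter (fun e => e.1 = v), g e
      = ∑ e ∈ E.filter (fun e => e.1 ∈ D), g e := by
  calc ∑ v ∈ D, ∑ e ∈ E.filter (fun e => e.1 = v), g e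
      = ∑ v ∈ D, ∑ e ∈ E, if e.1 = v then g e else 0 := by
        simp [Finset.sum_filter]
    _ = ∑ e ∈ E, ∑ v ∈ D, if e.1 = v then g e else 0 := Finset.sum_comm
    _ = ∑ e ∈ E, if e.1 ∈ D then g e else 0 := by
        refine Finset.sum_congr rfl fun e _ => ?_
        rw [Finset.sum_ite_eq D e.1 (fun _ => g e)]
    _ = ∑ e ∈ E.filter (fun e => e.1 ∈ D), g e := (Finset.sum_filter _ _).symm

lemma sum_fiber_snd (E : Finset (V × V)) (g : V × V → ℝ) (D : Finset V) :
    ∑ v ∈ D, ∑ e ∈ E.filter (fun e => e.2 = v), g e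
      = ∑ e ∈ E.filter (fun e => e.2 ∈ D), g e := by
  calc ∑ v ∈ D, ∑ e ∈ E.filter (fun e => e.2 = v), g e
      = ∑ v ∈ D, ∑ e ∈ E, if e.2 = v then g e else 0 := by
        simp [Finset.sum_filter]
    _ = ∑ e ∈ E, ∑ v ∈ D, if e.2 = v then g e else 0 := Finset.sum_comm
    _ = ∑ e ∈ E, if e.2 ∈ D then g e else 0 := by
        refine Finset.sum_congr rfl fun e _ => ?_
        rw [Finset.sum_ite_eq D e.2 (fun _ => g e)]
    _ = ∑ e ∈ E.filter (fun e => e.2 ∈ D), g e := (Finset.sum_filter _ _).symm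

lemma cut_split_fst (E : Finset (V × V)) (g : V × V → ℝ) (D : Finset V) :
    ∑ e ∈ E.filter (fun e => e.1 ∈ D), g e
      = ∑ e ∈ E.filter (fun e => e.1 ∈ D ∧ e.2 ∈ D), g e
        + ∑ e ∈ E.filter (fun e => e.1 ∈ D ∧ e.2 ∉ D), g e := by
  rw [← Finset.sum_filter_add_sum_filter_not (E.filter (fun e => e.1 ∈ D))
    (fun e => e.2 ∈ D) g, Finset.filter_filter, Finset.filter_filter]

lemma cut_split_snd (E : Finset (V × V)) (g : V × V → ℝ) (D : Finset V) :
    ∑ e ∈ E.filter (fun e => e.2 ∈ D), g e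
      = ∑ e ∈ E.filter (fun e => e.1 ∈ D ∧ e.2 ∈ D), g e
        + ∑ e ∈ E.filter (fun e => e.1 ∉ D ∧ e.2 ∈ D), g e := by
  rw [← Finset.sum_filter_add_sum_filter_not (E.filter (fun e => e.2 ∈ D))
    (fun e => e.1 ∈ D) g, Finset.filter_filter, Finset.filter_filter]
  congr 1
  · exact Finset.sum_congr (by ext e; simp [Finset.mem_filter]; tauto) fun _ _ => rfl
  · exact Finset.sum_congr (by ext e; simp [Finset.mem_filter]; tauto) fun _ _ => rfl

/-- flow decomposition across a cut. -/
lemma flowValue_eq_cut (E : Finset (V × V)) (w : V × V → ℝ) (s t : V) (f : V × V → ℝ)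
    (hf : IsFlow E w s t f) (D : Finset V) (hs : s ∈ D) (ht : t ∉ D) :
    flowValue E s f = flowOut E f D - flowIn E f D := by
  have key : ∑ v ∈ D, netOut E f v = netOut E f s := by
    refine Finset.sum_eq_single_of_mem s hs fun v hv hvs => ?_
    have hvt : v ≠ t := fun h => ht (h ▸ hv)
    have := hf.conserve v hvs hvt
    simp [netOut, this]
  have h1 : ∑ v ∈ D, netOut E f v
      = ∑ e ∈ E.filter (fun e => e.1 ∈ D), f e
        - ∑ e ∈ E.filter (fun e => e.2 ∈ D), f e := by
    unfold netOut
    rw [Finset.sum_sub_distrib, sum_fiber_fst, sum_fiber_snd]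
  have h2 := cut_split_fst E f D
  have h3 := cut_split_snd E f D
  have : flowValue E s f = netOut E f s := rfl
  rw [this, ← key, h1, h2, h3]
  unfold flowOut flowIn
  ring

lemma sum_update_add (S : Finset (V × V)) (g : V × V → ℝ) (e0 : V × V) (δ : ℝ) :
    ∑ e ∈ S, Function.update g e0 (g e0 + δ) e
      = (∑ e ∈ S, g e) + (if e0 ∈ S then δ else 0) := by
  by_cases h : e0 ∈ S
  · rw [if_pos h, Finset.sum_update_of_mem h, Finset.sdiff_singleton_eq_erase,
      ← Finset.add_sum_erase S g h]
    ring
  · rw [if_neg h, add_zero]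
    exact Finset.sum_congr rfl fun e he =>
      Function.update_of_ne (by rintro rfl; exact h he) _ g

lemma netOut_update (E : Finset (V × V)) (g : V × V → ℝ) (a b : V)
    (hab : (a, b) ∈ E) (δ : ℝ) (v : V) :
    netOut E (Function.update g (a, b) (g (a, b) + δ)) v
      = netOut E g v + δ * ((if v = a then 1 else 0) - (if v = b then 1 else 0)) := by
  unfold netOut
  rw [sum_update_add, sum_update_add]
  have h1 : ((a, b) ∈ E.filter (fun e => e.1 = v)) ↔ v = a := by
    simp [Finset.mem_filter, hab, eq_comm]
  have h2 : ((a, b) ∈ E.filter (fun e => e.2 = v)) ↔ v = b := by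
    simp [Finset.mem_filter, hab, eq_comm]
  have e1 : (if (a, b) ∈ E.filter (fun e => e.1 = v) then δ else 0)
      = if v = a then δ else 0 := by
    by_cases hva : v = a
    · rw [if_pos (h1.mpr hva), if_pos hva]
    · rw [if_neg (fun hm => hva (h1.mp hm)), if_neg hva]
  have e2 : (if (a, b) ∈ E.filter (fun e => e.2 = v) then δ else 0)
      = if v = b then δ else 0 := by
    by_cases hvb : v = b
    · rw [if_pos (h2.mpr hvb), if_pos hvb]
    · rw [if_neg (fun hm => hvb (h2.mp hm)), if_neg hvb]
  rw [e1, e2]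
  split_ifs <;> ring

/-- residual adjacency. -/
def Res (E : Finset (V × V)) (w f : V × V → ℝ) (a b : V) : Prop :=
  ((a, b) ∈ E ∧ f (a, b) < w (a, b)) ∨ ((b, a) ∈ E ∧ 0 < f (b, a))

lemma augment (E : Finset (V × V)) (w f : V × V → ℝ) (s : V)
    (hf0 : ∀ e ∈ E, 0 ≤ f e) (hfc : ∀ e ∈ E, f e ≤ w e) (hfs : ∀ e ∉ E, f e = 0)
    {x : V} (hx : Relation.ReflTransGen (Res E w f) s x) :
    ∀ η > (0:ℝ), ∃ ε > (0:ℝ), ∀ δ : ℝ, 0 < δ → δ ≤ ε → ∃ g : V × V → ℝ,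
      (∀ e ∈ E, 0 ≤ g e) ∧ (∀ e ∈ E, g e ≤ w e) ∧ (∀ e ∉ E, g e = 0) ∧
      (∀ e, |g e - f e| ≤ η) ∧
      (∀ v, netOut E g v = netOut E f v
        + δ * ((if v = s then 1 else 0) - (if v = x then 1 else 0))) := by
  induction hx with
  | refl =>
    intro η hη
    exact ⟨η, hη, fun δ _ _ => ⟨f, hf0, hfc, hfs,
      fun e => by simp [le_of_lt hη], fun v => by ring⟩⟩
  | @tail b c hsb hbc ih =>
    intro η hη
    rcases hbc with ⟨hmem, hlt⟩ | ⟨hmem, hposf⟩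
    · -- forward edge (b,c)
      set c0 : ℝ := w (b, c) - f (b, c) with hc0
      have hc0pos : 0 < c0 := sub_pos.mpr hlt
      have hη1 : (0:ℝ) < min (η / 2) (c0 / 2) := by positivity
      obtain ⟨ε₁, hε₁, H⟩ := ih (min (η / 2) (c0 / 2)) hη1
      refine ⟨min ε₁ (min (η / 2) (c0 / 2)), lt_min hε₁ hη1, fun δ hδ hδle => ?_⟩
      obtain ⟨g, hg0, hgc, hgs, hgf, hgn⟩ :=
        H δ hδ (le_trans hδle (min_le_left _ _))
      have hδsmall : δ ≤ min (η / 2) (c0 / 2) := le_trans hδle (min_le_right _ _)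
      have habs := hgf (b, c)
      have habs' : g (b, c) - f (b, c) ≤ min (η / 2) (c0 / 2) :=
        le_trans (le_abs_self _) habs
      refine ⟨Function.update g (b, c) (g (b, c) + δ), ?_, ?_, ?_, ?_, ?_⟩
      · intro e heE
        by_cases h : e = (b, c)
        · subst h; rw [Function.update_self]
          have := hg0 _ hmem; linarith
        · rw [Function.update_of_ne h]; exact hg0 e heE
      · intro e heE
        by_cases h : e = (b, c)
        · subst h; rw [Function.update_self]
          have h1 : δ ≤ c0 / 2 := le_trans hδsmall (min_le_right _ _)
          have h2 : g (b, c) - f (b, c) ≤ c0 / 2 :=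
            le_trans habs' (min_le_right _ _)
          simp only [hc0] at h1 h2 ⊢
          linarith
        · rw [Function.update_of_ne h]; exact hgc e heE
      · intro e heE
        have h : e ≠ (b, c) := by rintro rfl; exact heE hmem
        rw [Function.update_of_ne h]; exact hgs e heE
      · intro e
        by_cases h : e = (b, c)
        · subst h; rw [Function.update_self]
          have h1 : δ ≤ η / 2 := le_trans hδsmall (min_le_left _ _)
          have h2 : |g (b, c) - f (b, c)| ≤ η / 2 :=
            le_trans habs (min_le_left _ _)
          calc |g (b, c) + δ - f (b, c)| ≤ |g (b, c) - f (b, c)| + |δ| := by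
                have : g (b, c) + δ - f (b, c) = (g (b, c) - f (b, c)) + δ := by ring
                rw [this]; exact abs_add_le _ _
            _ ≤ η / 2 + η / 2 := by
                rw [abs_of_pos hδ]; exact add_le_add h2 h1
            _ = η := by ring
        · rw [Function.update_of_ne h]
          exact le_trans (hgf e) (le_trans (min_le_left _ _) (by linarith))
      · intro v
        rw [netOut_update E g b c hmem δ v, hgn v]
        ring
    · -- backward edge (c,b)
      set c0 : ℝ := f (c, b) with hc0
      have hc0pos : 0 < c0 := hposf
      have hη1 : (0:ℝ) < min (η / 2) (c0 / 2) := by positivity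
      obtain ⟨ε₁, hε₁, H⟩ := ih (min (η / 2) (c0 / 2)) hη1
      refine ⟨min ε₁ (min (η / 2) (c0 / 2)), lt_min hε₁ hη1, fun δ hδ hδle => ?_⟩
      obtain ⟨g, hg0, hgc, hgs, hgf, hgn⟩ :=
        H δ hδ (le_trans hδle (min_le_left _ _))
      have hδsmall : δ ≤ min (η / 2) (c0 / 2) := le_trans hδle (min_le_right _ _)
      have habs := hgf (c, b)
      have habs' : f (c, b) - g (c, b) ≤ min (η / 2) (c0 / 2) := by
        calc f (c, b) - g (c, b) ≤ |f (c, b) - g (c, b)| := le_abs_self _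
          _ = |g (c, b) - f (c, b)| := abs_sub_comm _ _
          _ ≤ _ := habs
      refine ⟨Function.update g (c, b) (g (c, b) + (-δ)), ?_, ?_, ?_, ?_, ?_⟩
      · intro e heE
        by_cases h : e = (c, b)
        · subst h; rw [Function.update_self]
          have h1 : δ ≤ c0 / 2 := le_trans hδsmall (min_le_right _ _)
          have h2 : f (c, b) - g (c, b) ≤ c0 / 2 :=
            le_trans habs' (min_le_right _ _)
          simp only [hc0] at h1 h2 ⊢
          linarith
        · rw [Function.update_of_ne h]; exact hg0 e heE
      · intro e heE
        by_cases h : e = (c, b)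
        · subst h; rw [Function.update_self]
          have := hgc _ hmem; linarith
        · rw [Function.update_of_ne h]; exact hgc e heE
      · intro e heE
        have h : e ≠ (c, b) := by rintro rfl; exact heE hmem
        rw [Function.update_of_ne h]; exact hgs e heE
      · intro e
        by_cases h : e = (c, b)
        · subst h; rw [Function.update_self]
          have h1 : δ ≤ η / 2 := le_trans hδsmall (min_le_left _ _)
          have h2 : |g (c, b) - f (c, b)| ≤ η / 2 :=
            le_trans habs (min_le_left _ _)
          calc |g (c, b) + (-δ) - f (c, b)| ≤ |g (c, b) - f (c, b)| + |(-δ)| := by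
                have : g (c, b) + (-δ) - f (c, b) = (g (c, b) - f (c, b)) + (-δ) := by ring
                rw [this]; exact abs_add_le _ _
            _ ≤ η / 2 + η / 2 := by
                rw [abs_neg, abs_of_pos hδ]; exact add_le_add h2 h1
            _ = η := by ring
        · rw [Function.update_of_ne h]
          exact le_trans (hgf e) (le_trans (min_le_left _ _) (by linarith))
      · intro v
        rw [netOut_update E g c b hmem (-δ) v, hgn v]
        ring

/-- a maximum flow induces a cut of equal capacity. -/
lemma exists_cut_eq_value (E : Finset (V × V)) (w : V × V → ℝ) (s t : V)
    (f : V × V → ℝ) (hst : s ≠ t) (hf : IsMaxFlow E w s t f) :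
    ∃ R : Finset V, IsCut s t R ∧ cutCap E w R = flowValue E s f := by
  classical
  by_cases hreach : Relation.ReflTransGen (Res E w f) s t
  · exfalso
    obtain ⟨ε, hε, H⟩ := augment E w f s hf.1.nonneg hf.1.le_cap hf.1.support hreach 1 one_pos
    obtain ⟨g, hg0, hgc, hgs, _, hgn⟩ := H ε hε le_rfl
    have hcons : ∀ v, v ≠ s → v ≠ t →
        ∑ e ∈ E.filter (fun e => e.1 = v), g e
          = ∑ e ∈ E.filter (fun e => e.2 = v), g e := by
      intro v hvs hvt
      have h := hgn v
      have hf0 : netOut E f v = 0 := sub_eq_zero.mpr (hf.1.conserve v hvs hvt)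
      rw [if_neg hvs, if_neg hvt, hf0] at h
      have h0 : netOut E g v = 0 := by rw [h]; ring
      unfold netOut at h0
      linarith
    have hgflow : IsFlow E w s t g := ⟨hg0, hgc, hgs, hcons⟩
    have hval : flowValue E s g = flowValue E s f + ε := by
      have h := hgn s
      rw [if_pos rfl, if_neg hst] at h
      have h1 : flowValue E s g = netOut E g s := rfl
      have h2 : flowValue E s f = netOut E f s := rfl
      rw [h1, h2, h]; ring
    have := hf.2 g hgflow
    rw [hval] at this
    linarith
  · set R : Finset V :=
      Finset.univ.filter (fun x => Relation.ReflTransGen (Res E w f) s x) with hR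
    have hsR : s ∈ R := Finset.mem_filter.mpr ⟨Finset.mem_univ s, Relation.ReflTransGen.refl⟩
    have htR : t ∉ R := fun h => hreach ((Finset.mem_filter.mp h).2)
    have hsat : ∀ e ∈ E.filter (fun e => e.1 ∈ R ∧ e.2 ∉ R), f e = w e := by
      intro e' he'
      have hm := Finset.mem_filter.mp he'
      obtain ⟨heE, h1, h2⟩ : e' ∈ E ∧ e'.1 ∈ R ∧ e'.2 ∉ R := ⟨hm.1, hm.2.1, hm.2.2⟩
      by_contra hne
      have hlt : f e' < w e' := lt_of_le_of_ne (hf.1.le_cap e' heE) hne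
      have hres : Res E w f e'.1 e'.2 := Or.inl ⟨heE, hlt⟩
      have : e'.2 ∈ R := Finset.mem_filter.mpr
        ⟨Finset.mem_univ _, ((Finset.mem_filter.mp h1).2).tail hres⟩
      exact h2 this
    have hzero : ∀ e ∈ E.filter (fun e => e.1 ∉ R ∧ e.2 ∈ R), f e = 0 := by
      intro e' he'
      have hm := Finset.mem_filter.mp he'
      obtain ⟨heE, h1, h2⟩ : e' ∈ E ∧ e'.1 ∉ R ∧ e'.2 ∈ R := ⟨hm.1, hm.2.1, hm.2.2⟩
      by_contra hne
      have hlt : 0 < f e' := lt_of_le_of_ne (hf.1.nonneg e' heE) (Ne.symm hne)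
      have hres : Res E w f e'.2 e'.1 := Or.inr ⟨heE, hlt⟩
      have : e'.1 ∈ R := Finset.mem_filter.mpr
        ⟨Finset.mem_univ _, ((Finset.mem_filter.mp h2).2).tail hres⟩
      exact h1 this
    have h1 : flowOut E f R = cutCap E w R := Finset.sum_congr rfl hsat
    have h2 : flowIn E f R = 0 := Finset.sum_eq_zero hzero
    have h3 := flowValue_eq_cut E w s t f hf.1 R hsR htR
    exact ⟨R, ⟨hsR, htR⟩, by rw [h3, h2, ← h1]; ring⟩

lemma cutSet_finite (E : Finset (V × V)) (w : V × V → ℝ) (s t : V) :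
    {x : ℝ | ∃ C : Finset V, IsCut s t C ∧ cutCap E w C = x}.Finite :=
  (Set.finite_range (cutCap E w)).subset (by rintro x ⟨C, _, h⟩; exact ⟨C, h⟩)

lemma minCutCap_le (E : Finset (V × V)) (w : V × V → ℝ) (s t : V) {D : Finset V}
    (hD : IsCut s t D) : minCutCap E w s t ≤ cutCap E w D :=
  csInf_le (cutSet_finite E w s t).bddBelow ⟨D, hD, rfl⟩

lemma exists_minCut (E : Finset (V × V)) (w : V × V → ℝ) (s t : V) (hst : s ≠ t) :
    ∃ D : Finset V, IsCut s t D ∧ cutCap E w D = minCutCap E w s t := by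
  have hne : {x : ℝ | ∃ C : Finset V, IsCut s t C ∧ cutCap E w C = x}.Nonempty :=
    ⟨_, Finset.univ.erase t,
      ⟨Finset.mem_erase.mpr ⟨hst, Finset.mem_univ s⟩, Finset.notMem_erase t _⟩, rfl⟩
  exact hne.csInf_mem (cutSet_finite E w s t)

lemma cutCap_erase (E : Finset (V × V)) (w : V × V → ℝ) (e : V × V) (he : e ∈ E)
    (D : Finset V) :
    cutCap E w D = cutCap (E.erase e) w D
      + (if e.1 ∈ D ∧ e.2 ∉ D then w e else 0) := by
  unfold cutCap
  conv_lhs => rw [← Finset.insert_erase he]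
  rw [Finset.filter_insert]
  by_cases h : e.1 ∈ D ∧ e.2 ∉ D
  · rw [if_pos h, if_pos h, Finset.sum_insert
      (fun hmem => Finset.notMem_erase e E (Finset.mem_filter.mp hmem).1)]
    ring
  · rw [if_neg h, if_neg h, add_zero]

end Aux

/-- for a tight edge `e = (u,v)`, the capacity of a mincut for `e` is strictly
smaller than the least capacity of an (s,t)-cut containing `v` but not `u`;
consequently a mincut for `e` is an (s,t)-cut of least capacity separating `u`
and `v`. -/
theorem tight_edge_mincut_separation (E : Finset (V × V)) (w : V × V → ℝ) (s t : V)
    (hst : s ≠ t) (hpos : ∀ e ∈ E, 0 < w e) (e : V × V) (he : e ∈ E)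
    (hvit : Vital E w s t e)
    (htight : ∃ f, IsMaxFlow E w s t f ∧ f e = w e)
    (C : Finset V) (hC : IsMincutFor E w s t e C)
    (Cvu : Finset V) (hCvu : IsCut s t Cvu ∧ e.2 ∈ Cvu ∧ e.1 ∉ Cvu)
    (hCvuMin : ∀ C', IsCut s t C' → e.2 ∈ C' → e.1 ∉ C' →
      cutCap E w Cvu ≤ cutCap E w C') :
    cutCap E w C < cutCap E w Cvu ∧
      (∀ C', IsCut s t C' →
        ((e.1 ∈ C' ∧ e.2 ∉ C') ∨ (e.2 ∈ C' ∧ e.1 ∉ C')) →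
        cutCap E w C ≤ cutCap E w C') := by
  classical
  obtain ⟨f, hfmax, hsatw⟩ := htight
  obtain ⟨R, hRcut, hRcap⟩ := exists_cut_eq_value E w s t f hst hfmax
  have hminle : minCutCap E w s t ≤ flowValue E s f := by
    rw [← hRcap]; exact minCutCap_le E w s t hRcut
  obtain ⟨D, hDcut, hDcap⟩ := exists_minCut (E.erase e) w s t hst
  have herase := cutCap_erase E w e he D
  have hconD : Contributes e D := by
    by_contra h
    rw [if_neg (by simpa [Contributes] using h), add_zero, hDcap] at herase
    have := minCutCap_le E w s t hDcut
    have hv := hvit.2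
    linarith
  have hDval : cutCap E w D = minCutCap (E.erase e) w s t + w e := by
    rw [herase, if_pos (by simpa [Contributes] using hconD), hDcap]
  have hCle : cutCap E w C ≤ cutCap E w D := hC.2.2 D hDcut hconD
  have hval := flowValue_eq_cut E w s t f hfmax.1 Cvu hCvu.1.1 hCvu.1.2
  have hout : flowOut E f Cvu ≤ cutCap E w Cvu :=
    Finset.sum_le_sum fun e' he' => hfmax.1.le_cap e' (Finset.mem_filter.mp he').1
  have hin : w e ≤ flowIn E f Cvu := by
    rw [← hsatw]
    exact Finset.single_le_sum
      (fun e' he' => hfmax.1.nonneg e' (Finset.mem_filter.mp he').1)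
      (Finset.mem_filter.mpr ⟨he, hCvu.2.2, hCvu.2.1⟩)
  have hmain : cutCap E w C < cutCap E w Cvu := by
    have hv := hvit.2
    linarith
  refine ⟨hmain, fun C' hC' hsep => ?_⟩
  rcases hsep with h | h
  · exact hC.2.2 C' hC' h
  · exact le_of_lt (lt_of_lt_of_le hmain (hCvuMin C' hC' h.1 h.2))
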